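/- Let d ≥ 1. Let Π be the SNP system with delays consisting of neurons σ1, σ2, σ3, σ4, σ5 and synapses (1,2), (1,3), (2,4), (3,5), where σ1 initially holds one spike and has the single rule a → a (delay 0), σ2 has the single rule a → a (delay 0), σ3 (a child neuron of the split) has the single rule a → a; d, and σ4, σ5 are sink neurons. Then, if σ1 spikes at time t, the sink σ4 receives its spike at time t+1 and the sink σ5 receives its spike at time t+1+d, so the total runtime of Π (the time when both sinks hold one spike) is 1 + d; and there exists an SNP system without delays Π̄ with one source neuron and two sink neurons σ4', σ5' whose total runtime is 1 + d, with σ4' first receiving a spike one step after the source first spikes, σ4' ending with exactly 1 + d spikes and σ5' ending with exactly 1 spike; hence Π̄ simulates the split routing of Π. -/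

import Mathlib

/-!
Formalization of Spiking Neural P (SNP) systems with delays, following
Cabarle–Buño–Adorna, "Time After Time: Notes on Delays In Spiking Neural
P Systems".

A rule `E/a^c → a^b; d` is modelled by the set `lang ⊆ ℕ` of spike counts `k`
with `a^k ∈ L(E)`, together with `c`, `b` and the delay `d`.  Each neuron has
at most one rule (sink neurons, which never fire, have none).  A configuration
assigns to every neuron its spike count `n i` and its remaining closed time
`clk i`.  If a rule with delay `d` fires during the step leading to the
configuration at time `t`, the produced spikes become visible in the
configuration at time `t + d`; spikes sent to a closed neuron are lost.
The first rule application is counted as happening at time `0`, so the total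
runtime (time needed for a spike to arrive at the sink neurons from the source
neurons) is one less than the index of the first configuration in which all
sink neurons hold a spike.
-/

open scoped Classical

structure SNPRule where
  /-- the spike counts accepted by the regular expression `E` -/
  lang : Set ℕ
  c : ℕ
  b : ℕ
  d : ℕ
  c_pos : 1 ≤ c
  b_le_c : b ≤ c

/-- The rule `a^c → a^b; d` (whose regular expression is `E = a^c`). -/
def simpleRule (c b d : ℕ) (hc : 1 ≤ c) (hb : b ≤ c) : SNPRule :=
  ⟨{c}, c, b, d, hc, hb⟩

/-- The rule `a⁺/a → a` (no delay). -/
def plusRule : SNPRule :=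
  ⟨{k | 1 ≤ k}, 1, 1, 0, le_refl 1, le_refl 1⟩

/-- An SNP system of degree `m`: initial spike counts, (at most) one rule per
neuron, and an irreflexive synapse relation. -/
structure SNPSystem (m : ℕ) where
  init : Fin m → ℕ
  rule : Fin m → Option SNPRule
  syn : Fin m → Fin m → Prop
  syn_irrefl : ∀ i, ¬ syn i i

/-- A configuration: spike counts and remaining closed times. -/
structure SNPConfig (m : ℕ) where
  n : Fin m → ℕ
  clk : Fin m → ℕ

namespace SNPSystem

variable {m m' : ℕ}

/-- Neuron `i` is open and its rule is applicable in configuration `C`. -/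
def enabled (S : SNPSystem m) (C : SNPConfig m) (i : Fin m) : Prop :=
  C.clk i = 0 ∧ ∃ r, S.rule i = some r ∧ C.n i ∈ r.lang ∧ r.c ≤ C.n i

/-- Spikes emitted by neuron `i` during the current step: either its rule fires
with delay `0`, or its closed period (after firing a rule with delay `≥ 1`)
expires now. -/
noncomputable def emits (S : SNPSystem m) (C : SNPConfig m) (i : Fin m) : ℕ :=
  match S.rule i with
  | none => 0
  | some r =>
      if C.clk i = 0 ∧ C.n i ∈ r.lang ∧ r.c ≤ C.n i ∧ r.d = 0 then r.b
      else if C.clk i = 1 then r.b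
      else 0

/-- Spikes consumed by neuron `i` if its rule fires in the current step. -/
noncomputable def consumed (S : SNPSystem m) (C : SNPConfig m) (i : Fin m) : ℕ :=
  match S.rule i with
  | none => 0
  | some r => if C.clk i = 0 ∧ C.n i ∈ r.lang ∧ r.c ≤ C.n i then r.c else 0

/-- Remaining closed time of neuron `i` after the current step. -/
noncomputable def nextClk (S : SNPSystem m) (C : SNPConfig m) (i : Fin m) : ℕ :=
  match S.rule i with
  | none => C.clk i - 1
  | some r =>
      if C.clk i = 0 ∧ C.n i ∈ r.lang ∧ r.c ≤ C.n i then r.d else C.clk i - 1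

/-- Spikes sent towards neuron `j` during the current step. -/
noncomputable def sent (S : SNPSystem m) (C : SNPConfig m) (j : Fin m) : ℕ :=
  ∑ i, if S.syn i j then S.emits C i else 0

/-- Spikes actually received by neuron `j` during the current step (spikes sent
to a closed neuron are lost). -/
noncomputable def recv (S : SNPSystem m) (C : SNPConfig m) (j : Fin m) : ℕ :=
  if S.nextClk C j = 0 then S.sent C j else 0

/-- One (synchronized, global-clock) computation step. -/
noncomputable def step (S : SNPSystem m) (C : SNPConfig m) : SNPConfig m where
  n := fun i => C.n i - S.consumed C i + S.recv C i
  clk := fun i => S.nextClk C i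

/-- The initial configuration: all neurons open, spike counts given by `init`. -/
def initConfig (S : SNPSystem m) : SNPConfig m where
  n := S.init
  clk := fun _ => 0

/-- The configuration at time `t`. -/
noncomputable def conf (S : SNPSystem m) (t : ℕ) : SNPConfig m :=
  (S.step)^[t] S.initConfig

/-- A source neuron: no incoming synapses. -/
def isSource (S : SNPSystem m) (i : Fin m) : Prop :=
  ∀ j, ¬ S.syn j i

/-- A sink neuron: no outgoing synapses, and it never fires. -/
def isSink (S : SNPSystem m) (i : Fin m) : Prop :=
  (∀ j, ¬ S.syn i j) ∧ S.rule i = none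

/-- Total time needed for a spike to arrive at the sink neuron(s) from the
source neuron(s); the first rule application counts as happening at time `0`,
whence the `- 1`. -/
noncomputable def totalRuntime (S : SNPSystem m) : ℕ :=
  sInf {t | ∀ i, S.isSink i → 1 ≤ (S.conf t).n i} - 1

/-- The first time (counted as in `totalRuntime`) at which neuron `i` holds a
spike. -/
noncomputable def firstArrivalTime (S : SNPSystem m) (i : Fin m) : ℕ :=
  sInf {t | 1 ≤ (S.conf t).n i} - 1

/-- The first time (counted as in `totalRuntime`) at which neuron `i` spikes. -/
noncomputable def firstSpikeTime (S : SNPSystem m) (i : Fin m) : ℕ :=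
  sInf {t | 1 ≤ S.emits (S.conf t) i}

/-- An SNP system without delays: every rule has `d = 0`. -/
def delayFree (S : SNPSystem m) : Prop :=
  ∀ i r, S.rule i = some r → r.d = 0

/-- `T.Simulates S`: `T` has no delays; spikes arrive at the sink neurons of `T`
at the same time as at the sink neurons of `S` or offset by some constant
integer `k`; and the number of spikes arriving at the sink neurons of `T`
equals that for `S` or is a factor of one of the delays of `S`. -/
noncomputable def Simulates (T : SNPSystem m') (S : SNPSystem m) : Prop :=
  T.delayFree ∧
  (∃ k : ℤ, (T.totalRuntime : ℤ) = (S.totalRuntime : ℤ) + k) ∧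
  (∀ j, T.isSink j → ∀ i, S.isSink i →
    (T.conf (T.totalRuntime + 1)).n j = (S.conf (S.totalRuntime + 1)).n i ∨
    ∃ p r, S.rule p = some r ∧ (T.conf (T.totalRuntime + 1)).n j ∣ r.d)

/-- Sequential routing along a synapse `(i, j)`. -/
def sequentialAt (S : SNPSystem m) (i j : Fin m) : Prop :=
  S.syn i j

/-- Iterative routing: the two neurons form a loop. -/
def iterativeAt (S : SNPSystem m) (i j : Fin m) : Prop :=
  S.syn i j ∧ S.syn j i

/-- A split at neuron `i`: `i` sends its spike to at least two neurons. -/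
def splitAt (S : SNPSystem m) (i : Fin m) : Prop :=
  ∃ j k, j ≠ k ∧ S.syn i j ∧ S.syn i k

/-- A join at neuron `j`: at least two neurons send their spikes to `j`. -/
def joinAt (S : SNPSystem m) (j : Fin m) : Prop :=
  ∃ i k, i ≠ k ∧ S.syn i j ∧ S.syn k j

end SNPSystem

/-- The split system `Π` of the statement: `σ1` (one spike, rule `a → a`) splits to
`σ2` (rule `a → a`) and `σ3` (a child neuron with rule `a → a; d`); `σ2` feeds the
sink `σ4` and `σ3` feeds the sink `σ5`. -/
def splitChildPi (d : ℕ) : SNPSystem 5 where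
  init := ![1, 0, 0, 0, 0]
  rule := ![some (simpleRule 1 1 0 (le_refl 1) (le_refl 1)),
            some (simpleRule 1 1 0 (le_refl 1) (le_refl 1)),
            some (simpleRule 1 1 d (le_refl 1) (le_refl 1)), none, none]
  syn := fun i j =>
    (i.val = 0 ∧ j.val = 1) ∨ (i.val = 0 ∧ j.val = 2) ∨
    (i.val = 1 ∧ j.val = 3) ∨ (i.val = 2 ∧ j.val = 4)
  syn_irrefl := by intro i h; omega

-- ===== auxiliary infrastructure =====

lemma SNPConfig.ext' {m : ℕ} {A B : SNPConfig m} (h1 : A.n = B.n) (h2 : A.clk = B.clk) :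
    A = B := by cases A; cases B; simp_all

lemma natInf {s : Set ℕ} {t0 : ℕ} (h1 : t0 ∈ s) (h2 : ∀ t ∈ s, t0 ≤ t) : sInf s = t0 :=
  le_antisymm (Nat.sInf_le h1) (le_csInf ⟨t0, h1⟩ h2)

lemma conf_succ {m : ℕ} (S : SNPSystem m) (t : ℕ) :
    S.conf (t + 1) = S.step (S.conf t) := by
  simp [SNPSystem.conf, Function.iterate_succ_apply']

-- ===== dynamics of splitChildPi =====

def CS (d t : ℕ) : SNPConfig 5 :=
  if t = 0 then ⟨![1,0,0,0,0], fun _ => 0⟩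
  else if t = 1 then ⟨![0,1,1,0,0], fun _ => 0⟩
  else if t ≤ d+1 then ⟨![0,0,0,1,0], ![0,0,d+2-t,0,0]⟩
  else ⟨![0,0,0,1,1], fun _ => 0⟩

lemma sstep0 (d : ℕ) :
    (splitChildPi d).step ⟨![1,0,0,0,0], fun _ => 0⟩ = ⟨![0,1,1,0,0], fun _ => 0⟩ := by
  apply SNPConfig.ext' <;> funext i <;> fin_cases i <;>
    simp [SNPSystem.step, SNPSystem.recv, SNPSystem.sent, SNPSystem.emits,
      SNPSystem.consumed, SNPSystem.nextClk, splitChildPi, simpleRule,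
      Fin.sum_univ_five] <;> decide

lemma sstep1 (d : ℕ) (hd : d ≠ 0) :
    (splitChildPi d).step ⟨![0,1,1,0,0], fun _ => 0⟩ = ⟨![0,0,0,1,0], ![0,0,d,0,0]⟩ := by
  apply SNPConfig.ext' <;> funext i <;> fin_cases i <;>
    simp [SNPSystem.step, SNPSystem.recv, SNPSystem.sent, SNPSystem.emits,
      SNPSystem.consumed, SNPSystem.nextClk, splitChildPi, simpleRule,
      Fin.sum_univ_five, hd] <;> decide

lemma sstep2 (d c : ℕ) (hc : 2 ≤ c) :
    (splitChildPi d).step ⟨![0,0,0,1,0], ![0,0,c,0,0]⟩ = ⟨![0,0,0,1,0], ![0,0,c-1,0,0]⟩ := by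
  apply SNPConfig.ext' <;> funext i <;> fin_cases i <;>
    simp [SNPSystem.step, SNPSystem.recv, SNPSystem.sent, SNPSystem.emits,
      SNPSystem.consumed, SNPSystem.nextClk, splitChildPi, simpleRule,
      Fin.sum_univ_five, show c ≠ 0 by omega, show c ≠ 1 by omega] <;> decide

lemma sstep3 (d : ℕ) :
    (splitChildPi d).step ⟨![0,0,0,1,0], ![0,0,1,0,0]⟩ = ⟨![0,0,0,1,1], fun _ => 0⟩ := by
  apply SNPConfig.ext' <;> funext i <;> fin_cases i <;>
    simp [SNPSystem.step, SNPSystem.recv, SNPSystem.sent, SNPSystem.emits,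
      SNPSystem.consumed, SNPSystem.nextClk, splitChildPi, simpleRule,
      Fin.sum_univ_five] <;> decide

lemma sstep4 (d : ℕ) :
    (splitChildPi d).step ⟨![0,0,0,1,1], fun _ => 0⟩ = ⟨![0,0,0,1,1], fun _ => 0⟩ := by
  apply SNPConfig.ext' <;> funext i <;> fin_cases i <;>
    simp [SNPSystem.step, SNPSystem.recv, SNPSystem.sent, SNPSystem.emits,
      SNPSystem.consumed, SNPSystem.nextClk, splitChildPi, simpleRule,
      Fin.sum_univ_five] <;> decide

lemma confS (d : ℕ) (hd : 1 ≤ d) : ∀ t, (splitChildPi d).conf t = CS d t := by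
  intro t
  induction t with
  | zero => rfl
  | succ t ih =>
    rw [conf_succ, ih]
    rcases Nat.lt_or_ge t 2 with h | h
    · interval_cases t
      · rw [show CS d 0 = ⟨![1,0,0,0,0], fun _ => 0⟩ from rfl, sstep0]
        simp [CS]
      · rw [show CS d 1 = ⟨![0,1,1,0,0], fun _ => 0⟩ from rfl, sstep1 d (by omega)]
        simp [CS, show (2:ℕ) ≤ d + 1 by omega, show d + 2 - 2 = d by omega]
    · rcases Nat.lt_or_ge t (d+1) with h2 | h2
      · -- 2 ≤ t ≤ d : middle to middle
        rw [show CS d t = ⟨![0,0,0,1,0], ![0,0,d+2-t,0,0]⟩ by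
          simp [CS, show t ≠ 0 by omega, show t ≠ 1 by omega, show t ≤ d+1 by omega]]
        rw [sstep2 d _ (by omega)]
        simp [CS, show t+1 ≠ 0 by omega, show t+1 ≠ 1 by omega,
          show t+1 ≤ d+1 by omega, show d+2-t-1 = d+2-(t+1) by omega]
        omega
      · rcases Nat.eq_or_lt_of_le h2 with h3 | h3
        · -- t = d+1 : clock expires
          rw [show CS d t = ⟨![0,0,0,1,0], ![0,0,1,0,0]⟩ by
            simp [CS, show t ≠ 0 by omega, show t ≠ 1 by omega, show t ≤ d+1 by omega,
              show d+2-t = 1 by omega]]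
          rw [sstep3]
          simp [CS, show t+1 ≠ 0 by omega, show t+1 ≠ 1 by omega,
            show ¬ (t+1 ≤ d+1) by omega]
          omega
        · -- t ≥ d+2 : fixed point
          rw [show CS d t = ⟨![0,0,0,1,1], fun _ => 0⟩ by
            simp [CS, show t ≠ 0 by omega, show t ≠ 1 by omega, show ¬ (t ≤ d+1) by omega]]
          rw [sstep4]
          simp [CS, show t+1 ≠ 0 by omega, show t+1 ≠ 1 by omega,
            show ¬ (t+1 ≤ d+1) by omega]
          omega
-- ===== the delay-free system =====

def barPi (d : ℕ) : SNPSystem 5 where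
  init := ![d+1, 0, 0, 0, 0]
  rule := ![some plusRule, some plusRule,
            some (simpleRule (d+1) 1 0 (by omega) (by omega)), none, none]
  syn := fun i j =>
    (i.val = 0 ∧ j.val = 1) ∨ (i.val = 0 ∧ j.val = 2) ∨
    (i.val = 1 ∧ j.val = 3) ∨ (i.val = 2 ∧ j.val = 4)
  syn_irrefl := by intro i h; omega

def CT (d t : ℕ) : SNPConfig 5 :=
  if t = 0 then ⟨![d+1,0,0,0,0], fun _ => 0⟩
  else if t ≤ d+1 then ⟨![d+1-t,1,t,t-1,0], fun _ => 0⟩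
  else ⟨![0,0,0,d+1,1], fun _ => 0⟩

lemma bstep0 (d : ℕ) :
    (barPi d).step ⟨![d+1,0,0,0,0], fun _ => 0⟩ = ⟨![d,1,1,0,0], fun _ => 0⟩ := by
  apply SNPConfig.ext' <;> funext i <;> fin_cases i <;>
    simp +decide [SNPSystem.step, SNPSystem.recv, SNPSystem.sent, SNPSystem.emits,
      SNPSystem.consumed, SNPSystem.nextClk, barPi, simpleRule, plusRule,
      Fin.sum_univ_five, show ¬ (d+1 ≤ 0) by omega] <;> omega

lemma bstepMid (d a k s : ℕ) (ha : 1 ≤ a) (hk : 1 ≤ k) (hk2 : k ≤ d) :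
    (barPi d).step ⟨![a,1,k,s,0], fun _ => 0⟩ = ⟨![a-1,1,k+1,s+1,0], fun _ => 0⟩ := by
  apply SNPConfig.ext' <;> funext i <;> fin_cases i <;>
    simp +decide [SNPSystem.step, SNPSystem.recv, SNPSystem.sent, SNPSystem.emits,
      SNPSystem.consumed, SNPSystem.nextClk, barPi, simpleRule, plusRule,
      Fin.sum_univ_five, ha, show k ≠ d+1 by omega] <;> omega

lemma bstepLast (d : ℕ) :
    (barPi d).step ⟨![0,1,d+1,d,0], fun _ => 0⟩ = ⟨![0,0,0,d+1,1], fun _ => 0⟩ := by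
  apply SNPConfig.ext' <;> funext i <;> fin_cases i <;>
    simp +decide [SNPSystem.step, SNPSystem.recv, SNPSystem.sent, SNPSystem.emits,
      SNPSystem.consumed, SNPSystem.nextClk, barPi, simpleRule, plusRule,
      Fin.sum_univ_five] <;> omega

lemma bstepFix (d : ℕ) :
    (barPi d).step ⟨![0,0,0,d+1,1], fun _ => 0⟩ = ⟨![0,0,0,d+1,1], fun _ => 0⟩ := by
  apply SNPConfig.ext' <;> funext i <;> fin_cases i <;>
    simp +decide [SNPSystem.step, SNPSystem.recv, SNPSystem.sent, SNPSystem.emits,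
      SNPSystem.consumed, SNPSystem.nextClk, barPi, simpleRule, plusRule,
      Fin.sum_univ_five, show ¬ (d+1 ≤ 0) by omega] <;> omega

lemma confT (d : ℕ) (hd : 1 ≤ d) : ∀ t, (barPi d).conf t = CT d t := by
  intro t
  induction t with
  | zero => rfl
  | succ t ih =>
    rw [conf_succ, ih]
    rcases Nat.eq_or_lt_of_le (Nat.zero_le t) with h0 | h0
    · rw [show CT d t = ⟨![d+1,0,0,0,0], fun _ => 0⟩ by rw [← h0]; rfl, bstep0]
      simp [CT, show t+1 = 1 by omega, show (1:ℕ) ≤ d+1 by omega,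
        show d+1-1 = d by omega]
    · rcases Nat.lt_or_ge t (d+1) with h2 | h2
      · -- 1 ≤ t ≤ d
        rw [show CT d t = ⟨![d+1-t,1,t,t-1,0], fun _ => 0⟩ by
          simp [CT, show t ≠ 0 by omega, show t ≤ d+1 by omega]]
        rw [bstepMid d _ _ _ (by omega) (by omega) (by omega)]
        simp [CT, show t+1 ≠ 0 by omega, show t+1 ≤ d+1 by omega,
          show d+1-t-1 = d-t by omega, show d+1-(t+1) = d-t by omega,
          show t-1+1 = t by omega, show t+1-1 = t by omega]
      · rcases Nat.eq_or_lt_of_le h2 with h3 | h3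
        · -- t = d+1
          subst h3
          rw [show CT d (d+1) = ⟨![0,1,d+1,d,0], fun _ => 0⟩ by
            simp [CT, show d+1 ≠ 0 by omega, show d+1-(d+1) = 0 by omega,
              show d+1-1 = d by omega]]
          rw [bstepLast]
          simp [CT, show ¬ (d+1+1 ≤ d+1) by omega]
        · -- t ≥ d+2
          rw [show CT d t = ⟨![0,0,0,d+1,1], fun _ => 0⟩ by
            simp [CT, show t ≠ 0 by omega, show ¬ (t ≤ d+1) by omega]]
          rw [bstepFix]
          simp [CT, show t+1 ≠ 0 by omega, show ¬ (t+1 ≤ d+1) by omega]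
-- ===== evaluation lemmas for CS =====

lemma CS_n3_zero (d t : ℕ) (h : t < 2) : (CS d t).n 3 = 0 := by
  unfold CS; split_ifs <;> first | rfl | omega

lemma CS_n3_one (d t : ℕ) (h : 2 ≤ t) : (CS d t).n 3 = 1 := by
  unfold CS; split_ifs <;> first | rfl | omega

lemma CS_n4_zero (d t : ℕ) (h : t < d + 2) : (CS d t).n 4 = 0 := by
  unfold CS; split_ifs <;> first | rfl | omega

lemma CS_n4_one (d t : ℕ) (h : d + 2 ≤ t) : (CS d t).n 4 = 1 := by
  unfold CS; split_ifs <;> first | rfl | omega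

-- ===== evaluation lemmas for CT =====

lemma CT_n3_zero (d t : ℕ) (h : t < 2) : (CT d t).n 3 = 0 := by
  unfold CT; split_ifs <;> first | rfl | (show t - 1 = 0; omega) | omega

lemma CT_n3_pos (d t : ℕ) (h : 2 ≤ t) : 1 ≤ (CT d t).n 3 := by
  unfold CT; split_ifs <;> first | (show 1 ≤ t - 1; omega) | (show (1:ℕ) ≤ d + 1; omega) | omega

lemma CT_n3_final (d t : ℕ) (h : d + 2 ≤ t) : (CT d t).n 3 = d + 1 := by
  unfold CT; split_ifs <;> first | rfl | omega

lemma CT_n4_zero (d t : ℕ) (h : t < d + 2) : (CT d t).n 4 = 0 := by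
  unfold CT; split_ifs <;> first | rfl | omega

lemma CT_n4_one (d t : ℕ) (h : d + 2 ≤ t) : (CT d t).n 4 = 1 := by
  unfold CT; split_ifs <;> first | rfl | omega

-- ===== sinks and sources =====

lemma sinkS (d : ℕ) (i : Fin 5) : (splitChildPi d).isSink i ↔ i = 3 ∨ i = 4 := by
  constructor
  · rintro ⟨-, hr⟩
    fin_cases i <;> simp_all [splitChildPi]
  · rintro (rfl | rfl) <;>
      exact ⟨fun j h => by simp only [splitChildPi] at h; omega, rfl⟩

lemma sinkT (d : ℕ) (i : Fin 5) : (barPi d).isSink i ↔ i = 3 ∨ i = 4 := by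
  constructor
  · rintro ⟨-, hr⟩
    fin_cases i <;> simp_all [barPi]
  · rintro (rfl | rfl) <;>
      exact ⟨fun j h => by simp only [barPi] at h; omega, rfl⟩

lemma sourceT (d : ℕ) (i : Fin 5) : (barPi d).isSource i ↔ i = 0 := by
  constructor
  · intro hi
    by_contra hne
    have hv : i.val ≠ 0 := fun h => hne (Fin.ext h)
    have h5 : i.val < 5 := i.isLt
    rcases (by omega : i.val = 1 ∨ i.val = 2 ∨ i.val = 3 ∨ i.val = 4) with h | h | h | h
    · exact hi 0 (Or.inl ⟨rfl, h⟩)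
    · exact hi 0 (Or.inr (Or.inl ⟨rfl, h⟩))
    · exact hi 1 (Or.inr (Or.inr (Or.inl ⟨rfl, h⟩)))
    · exact hi 2 (Or.inr (Or.inr (Or.inr ⟨rfl, h⟩)))
  · rintro rfl
    intro j h
    simp only [barPi] at h
    omega

-- ===== runtimes and arrival times =====

lemma emitsS0 (d : ℕ) : (splitChildPi d).emits ((splitChildPi d).conf 0) 0 = 1 := by
  simp [SNPSystem.emits, SNPSystem.conf, SNPSystem.initConfig, splitChildPi, simpleRule]

lemma emitsT0 (d : ℕ) : (barPi d).emits ((barPi d).conf 0) 0 = 1 := by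
  simp [SNPSystem.emits, SNPSystem.conf, SNPSystem.initConfig, barPi, plusRule]

lemma firstSpikeS (d : ℕ) : (splitChildPi d).firstSpikeTime 0 = 0 := by
  unfold SNPSystem.firstSpikeTime
  exact natInf (by simp [emitsS0]) (fun t _ => Nat.zero_le t)

lemma firstSpikeT (d : ℕ) : (barPi d).firstSpikeTime 0 = 0 := by
  unfold SNPSystem.firstSpikeTime
  exact natInf (by simp [emitsT0]) (fun t _ => Nat.zero_le t)

lemma firstArrS3 (d : ℕ) (hd : 1 ≤ d) : (splitChildPi d).firstArrivalTime 3 = 1 := by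
  unfold SNPSystem.firstArrivalTime
  rw [natInf (t0 := 2)]
  · simp only [Set.mem_setOf_eq, confS d hd]
    rw [CS_n3_one d 2 le_rfl]
  · intro t ht
    simp only [Set.mem_setOf_eq, confS d hd] at ht
    by_contra h
    rw [CS_n3_zero d t (by omega)] at ht
    omega

lemma firstArrS4 (d : ℕ) (hd : 1 ≤ d) : (splitChildPi d).firstArrivalTime 4 = 1 + d := by
  unfold SNPSystem.firstArrivalTime
  rw [natInf (t0 := d + 2)]
  · omega
  · simp only [Set.mem_setOf_eq, confS d hd]
    rw [CS_n4_one d (d+2) le_rfl]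
  · intro t ht
    simp only [Set.mem_setOf_eq, confS d hd] at ht
    by_contra h
    rw [CS_n4_zero d t (by omega)] at ht
    omega

lemma firstArrT3 (d : ℕ) (hd : 1 ≤ d) : (barPi d).firstArrivalTime 3 = 1 := by
  unfold SNPSystem.firstArrivalTime
  rw [natInf (t0 := 2)]
  · simp only [Set.mem_setOf_eq, confT d hd]
    exact CT_n3_pos d 2 le_rfl
  · intro t ht
    simp only [Set.mem_setOf_eq, confT d hd] at ht
    by_contra h
    rw [CT_n3_zero d t (by omega)] at ht
    omega

lemma runtimeS (d : ℕ) (hd : 1 ≤ d) : (splitChildPi d).totalRuntime = 1 + d := by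
  unfold SNPSystem.totalRuntime
  rw [natInf (t0 := d + 2)]
  · omega
  · intro i hi
    rw [sinkS] at hi
    rw [confS d hd]
    rcases hi with rfl | rfl
    · rw [CS_n3_one d (d+2) (by omega)]
    · rw [CS_n4_one d (d+2) le_rfl]
  · intro t ht
    have h4 := ht 4 ((sinkS d 4).mpr (Or.inr rfl))
    rw [confS d hd] at h4
    by_contra h
    rw [CS_n4_zero d t (by omega)] at h4
    omega

lemma runtimeT (d : ℕ) (hd : 1 ≤ d) : (barPi d).totalRuntime = 1 + d := by
  unfold SNPSystem.totalRuntime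
  rw [natInf (t0 := d + 2)]
  · omega
  · intro i hi
    rw [sinkT] at hi
    rw [confT d hd]
    rcases hi with rfl | rfl
    · exact CT_n3_pos d (d+2) (by omega)
    · rw [CT_n4_one d (d+2) le_rfl]
  · intro t ht
    have h4 := ht 4 ((sinkT d 4).mpr (Or.inr rfl))
    rw [confT d hd] at h4
    by_contra h
    rw [CT_n4_zero d t (by omega)] at h4
    omega
lemma delayFreeT (d : ℕ) : (barPi d).delayFree := by
  intro i r hr
  fin_cases i <;> simp [barPi] at hr <;> simp [← hr, plusRule, simpleRule]

theorem split_child_delay_simulation (d : ℕ) (hd : 1 ≤ d) :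
    -- if σ1 spikes at time t then σ4 receives its spike at time t + 1
    (splitChildPi d).firstArrivalTime 3 = (splitChildPi d).firstSpikeTime 0 + 1 ∧
    -- and σ5 receives its spike at time t + 1 + d
    (splitChildPi d).firstArrivalTime 4 = (splitChildPi d).firstSpikeTime 0 + 1 + d ∧
    -- so the total runtime of Π (when both sinks hold one spike) is 1 + d
    (splitChildPi d).totalRuntime = 1 + d ∧
    -- there is a delay-free Π̄ with one source and two sinks σ4', σ5', total runtime
    -- 1 + d, with σ4' first receiving a spike one step after the source first spikes,
    -- σ4' ending with exactly 1 + d spikes and σ5' ending with exactly 1 spike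
    (∃ (m : ℕ) (T : SNPSystem m) (src s4 s5 : Fin m),
      T.delayFree ∧
      T.isSource src ∧ (∀ i, T.isSource i → i = src) ∧
      s4 ≠ s5 ∧ T.isSink s4 ∧ T.isSink s5 ∧ (∀ i, T.isSink i → i = s4 ∨ i = s5) ∧
      T.totalRuntime = 1 + d ∧
      T.firstArrivalTime s4 = T.firstSpikeTime src + 1 ∧
      (∀ t, T.totalRuntime + 1 ≤ t → (T.conf t).n s4 = 1 + d) ∧
      (∀ t, T.totalRuntime + 1 ≤ t → (T.conf t).n s5 = 1) ∧
      -- hence Π̄ simulates the split routing of Π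
      T.Simulates (splitChildPi d)) := by
  have hd0 : d ≠ 0 := by omega
  refine ⟨?_, ?_, ?_, 5, barPi d, 0, 3, 4, delayFreeT d, ?_, ?_, ?_, ?_, ?_, ?_,
    runtimeT d hd, ?_, ?_, ?_, ?_⟩
  · rw [firstArrS3 d hd, firstSpikeS d]
  · rw [firstArrS4 d hd, firstSpikeS d]
  · exact runtimeS d hd
  · exact (sourceT d 0).mpr rfl
  · exact fun i hi => (sourceT d i).mp hi
  · decide
  · exact (sinkT d 3).mpr (Or.inl rfl)
  · exact (sinkT d 4).mpr (Or.inr rfl)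
  · exact fun i hi => (sinkT d i).mp hi
  · rw [firstArrT3 d hd, firstSpikeT d]
  · intro t ht
    rw [runtimeT d hd] at ht
    rw [confT d hd, CT_n3_final d t (by omega)]
    omega
  · intro t ht
    rw [runtimeT d hd] at ht
    rw [confT d hd, CT_n4_one d t (by omega)]
  · refine ⟨delayFreeT d, ⟨0, by rw [runtimeT d hd, runtimeS d hd]; ring⟩, ?_⟩
    intro j hj i hi
    rw [sinkT] at hj
    rw [runtimeT d hd, runtimeS d hd]
    rcases hj with rfl | rfl
    · right
      exact ⟨0, simpleRule 1 1 0 (le_refl 1) (le_refl 1), rfl, by simp [simpleRule]⟩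
    · left
      rw [sinkS] at hi
      rw [confT d hd, confS d hd, CT_n4_one d (1+d+1) (by omega)]
      rcases hi with rfl | rfl
      · rw [CS_n3_one d (1+d+1) (by omega)]
      · rw [CS_n4_one d (1+d+1) (by omega)]
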